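/- arXiv:2204.11133 — 3 statements merged into one kernel-verified Lean document; each statement's English description precedes it below -/
import Mathlib

section
/- Let H be a real inner product space, let φ₁, …, φ_M ∈ H, let 𝒦 ∈ ℝ^{M×M} be the Gram matrix 𝒦_{ij} = ⟨φ_i, φ_j⟩, let k ≥ 1 be an integer and λ a real number. Define φ̂_I = (1/M)·Σ_{i=1}^M φ_i. Then for every binary vector z ∈ {0,1}^M with Σ_{i=1}^M z_i = k, setting φ̂_C = (1/k)·Σ_{i=1}^M z_i·φ_i, the QUBO objective with matrix Q = (1/k²)·𝒦 + λ·1_M·1_Mᵀ and linear term q = −2·((1/(kM))·𝒦·1_M + λk·1_M) satisfies zᵀQz + qᵀz = ‖φ̂_I − φ̂_C‖² − ‖φ̂_I‖² − λk². -/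
open Matrix BigOperators RealInnerProductSpace

/-- KDC QUBO versus the kernel mean discrepancy (Proposition 2): for a Gram matrix
`𝒦` of feature vectors `φ i` and a binary vector `z` selecting exactly `k` points,
`zᵀQz + qᵀz = ‖φ̂_I − φ̂_C‖² − ‖φ̂_I‖² − λk²`. -/
theorem kdc_qubo_discrepancy {H : Type*} [NormedAddCommGroup H] [InnerProductSpace ℝ H]
    (M : ℕ) (hM : 1 ≤ M) (φ : Fin M → H)
    (𝒦 : Matrix (Fin M) (Fin M) ℝ) (h𝒦 : ∀ i j, 𝒦 i j = ⟪φ i, φ j⟫)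
    (k : ℕ) (hk : 1 ≤ k) (lam : ℝ)
    (z : Fin M → ℝ) (hz : ∀ i, z i = 0 ∨ z i = 1)
    (hsum : ∑ i, z i = (k : ℝ)) :
    let one : Fin M → ℝ := fun _ => 1
    let φI : H := (M : ℝ)⁻¹ • ∑ i, φ i
    let φC : H := (k : ℝ)⁻¹ • ∑ i, z i • φ i
    let Q : Matrix (Fin M) (Fin M) ℝ :=
      ((k : ℝ) ^ 2)⁻¹ • 𝒦 + lam • vecMulVec one one
    let q : Fin M → ℝ :=
      (-2 : ℝ) • ((((k : ℝ) * (M : ℝ))⁻¹) • (𝒦 *ᵥ one) + (lam * (k : ℝ)) • one)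
    z ⬝ᵥ Q *ᵥ z + q ⬝ᵥ z = ‖φI - φC‖ ^ 2 - ‖φI‖ ^ 2 - lam * (k : ℝ) ^ 2 := by
  intro one φI φC Q q
  set S : ℝ := ∑ i, ∑ j, z i * (𝒦 i j * z j) with hS
  set T : ℝ := ∑ i, (∑ j, 𝒦 i j) * z i with hT
  have hsymm : ∀ i j, 𝒦 i j = 𝒦 j i := fun i j => by
    rw [h𝒦, h𝒦, real_inner_comm]
  have key : ∀ (a b : Fin M → ℝ),
      ⟪∑ i, a i • φ i, ∑ j, b j • φ j⟫ = ∑ i, ∑ j, a i * b j * 𝒦 i j := by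
    intro a b
    rw [sum_inner]
    refine Finset.sum_congr rfl fun i _ => ?_
    rw [inner_sum]
    refine Finset.sum_congr rfl fun j _ => ?_
    rw [real_inner_smul_left, real_inner_smul_right, h𝒦, mul_assoc]
  have hφI : φI = ∑ i, (fun _ : Fin M => (M : ℝ)⁻¹) i • φ i := by
    simp [φI, Finset.smul_sum]
  have hφC : φC = ∑ i, (fun i => (k : ℝ)⁻¹ * z i) i • φ i := by
    simp [φC, Finset.smul_sum, smul_smul]
  have hCC : ⟪φC, φC⟫ = ((k:ℝ)⁻¹ * (k:ℝ)⁻¹) * S := by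
    rw [hφC, key, hS, Finset.mul_sum]
    refine Finset.sum_congr rfl fun i _ => ?_
    rw [Finset.mul_sum]
    refine Finset.sum_congr rfl fun j _ => ?_
    ring
  have hIC : ⟪φI, φC⟫ = ((M:ℝ)⁻¹ * (k:ℝ)⁻¹) * T := by
    rw [hφI, hφC, key, Finset.sum_comm, hT, Finset.mul_sum]
    refine Finset.sum_congr rfl fun j _ => ?_
    rw [Finset.sum_mul, Finset.mul_sum]
    refine Finset.sum_congr rfl fun i _ => ?_
    rw [hsymm i j]
    ring
  have hRHS : ‖φI - φC‖ ^ 2 - ‖φI‖ ^ 2 - lam * (k : ℝ) ^ 2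
      = ⟪φC, φC⟫ - 2 * ⟪φI, φC⟫ - lam * (k : ℝ) ^ 2 := by
    rw [norm_sub_sq_real]; ring_nf
    rw [real_inner_self_eq_norm_sq]; ring
  -- LHS: quadratic part
  have h1 : ∀ i, (Q *ᵥ z) i = ((k:ℝ)^2)⁻¹ * (∑ j, 𝒦 i j * z j) + lam * (k:ℝ) := by
    intro i
    simp only [Q, mulVec, dotProduct, Matrix.add_apply, Matrix.smul_apply,
      vecMulVec_apply, one, smul_eq_mul, mul_one]
    have : ∀ j ∈ Finset.univ, (((k:ℝ)^2)⁻¹ * 𝒦 i j + lam) * z j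
        = ((k:ℝ)^2)⁻¹ * (𝒦 i j * z j) + lam * z j := fun j _ => by ring
    rw [Finset.sum_congr rfl this, Finset.sum_add_distrib, ← Finset.mul_sum,
      ← Finset.mul_sum, hsum]
  have hA : z ⬝ᵥ Q *ᵥ z = ((k:ℝ)^2)⁻¹ * S + lam * ((k:ℝ) * (k:ℝ)) := by
    simp only [dotProduct, h1]
    have : ∀ i ∈ Finset.univ, z i * (((k:ℝ)^2)⁻¹ * (∑ j, 𝒦 i j * z j) + lam * (k:ℝ))
        = ((k:ℝ)^2)⁻¹ * (z i * ∑ j, 𝒦 i j * z j) + lam * (k:ℝ) * z i := fun i _ => by ring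
    rw [Finset.sum_congr rfl this, Finset.sum_add_distrib, ← Finset.mul_sum,
      ← Finset.mul_sum, hsum]
    have e : ∑ i, z i * ∑ j, 𝒦 i j * z j = S := by
      rw [hS]; exact Finset.sum_congr rfl fun i _ => Finset.mul_sum _ _ _
    rw [e]; ring
  -- LHS: linear part
  have hB : q ⬝ᵥ z = (-2) * (((k:ℝ)*(M:ℝ))⁻¹ * T) + (-2) * (lam * (k:ℝ) * (k:ℝ)) := by
    simp only [dotProduct, q, Pi.smul_apply, Pi.add_apply, mulVec, one, smul_eq_mul,
      mul_one, dotProduct]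
    have : ∀ i ∈ Finset.univ,
        (-2 : ℝ) * (((k:ℝ)*(M:ℝ))⁻¹ * (∑ j, 𝒦 i j) + lam * (k:ℝ)) * z i
        = ((-2) * ((k:ℝ)*(M:ℝ))⁻¹) * ((∑ j, 𝒦 i j) * z i) + ((-2) * (lam * (k:ℝ))) * z i :=
      fun i _ => by ring
    rw [Finset.sum_congr rfl this, Finset.sum_add_distrib, ← Finset.mul_sum,
      ← Finset.mul_sum, hsum, ← hT]
    ring
  rw [hA, hB, hRHS, hCC, hIC]
  have hk' : (k:ℝ) ≠ 0 := Nat.cast_ne_zero.mpr (by omega)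
  have hM' : (M:ℝ) ≠ 0 := Nat.cast_ne_zero.mpr (by omega)
  field_simp
  ring
end

section
/- Let n, m ≥ 1 and let v ∈ {0,1}^{n·m} be indexed as v_{ij} for i ∈ [n], j ∈ [m]. For each i, let S_i ∈ {0,1}^{nm×nm} be the matrix with (S_i v)_{i'j} = v_{ij} for all i' ≠ i and (S_i v)_{ij} = 0. Then (1) vᵀS_iv = Σ_{i'≠i} Σ_{j=1}^m v_{ij}·v_{i'j} for each i, and (2) vᵀS_iv = 0 holds for all i ∈ [n] if and only if for every j ∈ [m] there is at most one index i ∈ [n] with v_{ij} = 1. -/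
open Matrix BigOperators Finset

/-- Properties of the duplicate-matching penalty matrices `S_i` (Proposition 3):
(1) `vᵀS_iv = Σ_{i'≠i} Σ_j v_{ij}·v_{i'j}`, and (2) all these quadratic forms vanish
iff every keypoint `y_j` is matched to at most one keypoint `x_i`. -/
theorem matching_duplicate_constraint (n m : ℕ) (hn : 1 ≤ n) (hm : 1 ≤ m)
    (v : Fin n × Fin m → ℝ) (hv : ∀ p, v p = 0 ∨ v p = 1) :
    let S : Fin n → Matrix (Fin n × Fin m) (Fin n × Fin m) ℝ :=
      fun i => Matrix.of fun p q => if p.1 ≠ i ∧ q.1 = i ∧ q.2 = p.2 then 1 else 0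
    (∀ i, v ⬝ᵥ S i *ᵥ v
        = ∑ i' ∈ Finset.univ.filter (· ≠ i), ∑ j, v (i, j) * v (i', j)) ∧
    ((∀ i, v ⬝ᵥ S i *ᵥ v = 0) ↔
      ∀ j : Fin m, ∀ i₁ i₂ : Fin n, v (i₁, j) = 1 → v (i₂, j) = 1 → i₁ = i₂) := by
  intro S
  have hnn : ∀ p, 0 ≤ v p := fun p => by rcases hv p with h | h <;> simp [h]
  have key : ∀ i, v ⬝ᵥ S i *ᵥ v
      = ∑ i' ∈ Finset.univ.filter (· ≠ i), ∑ j, v (i, j) * v (i', j) := by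
    intro i
    have h1 : ∀ p : Fin n × Fin m,
        (∑ q, (if p.1 ≠ i ∧ q.1 = i ∧ q.2 = p.2 then (1:ℝ) else 0) * v q)
          = if p.1 ≠ i then v (i, p.2) else 0 := by
      intro p
      by_cases hp : p.1 = i
      · simp [hp]
      · have : ∀ q : Fin n × Fin m, (q.1 = i ∧ q.2 = p.2) ↔ q = (i, p.2) := by
          intro q; rw [Prod.ext_iff]
        simp [hp, this, Finset.sum_ite_eq']
    simp only [S, dotProduct, mulVec, Matrix.of_apply]
    rw [Finset.sum_congr rfl (fun p _ => by rw [h1 p])]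
    rw [Fintype.sum_prod_type]
    rw [Finset.sum_filter]
    refine Finset.sum_congr rfl fun i' _ => ?_
    by_cases h : i' = i
    · simp [h]
    · simp [h, mul_comm]
  refine ⟨key, ?_, ?_⟩
  · intro h j i₁ i₂ h1 h2
    by_contra hne
    have h0 := h i₂
    rw [key] at h0
    have hmem : i₁ ∈ Finset.univ.filter (· ≠ i₂) := by simp [hne]
    have := (Finset.sum_eq_zero_iff_of_nonneg (fun i' _ =>
      Finset.sum_nonneg fun j _ => mul_nonneg (hnn _) (hnn _))).mp h0 i₁ hmem
    have := (Finset.sum_eq_zero_iff_of_nonneg (fun j _ =>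
      mul_nonneg (hnn _) (hnn _))).mp this j (Finset.mem_univ j)
    rw [h1, h2] at this
    norm_num at this
  · intro h i
    rw [key]
    apply Finset.sum_eq_zero
    intro i' hi'
    simp only [Finset.mem_filter] at hi'
    apply Finset.sum_eq_zero
    intro j _
    rcases hv (i, j) with h0 | h1
    · rw [h0, zero_mul]
    · rcases hv (i', j) with h0 | h2
      · rw [h0, mul_zero]
      · exact absurd (h j i i' h1 h2).symm hi'.2
end

section
/- Let H be a real inner product space, φ₁, …, φ_M ∈ H with Gram matrix 𝒦_{ij} = ⟨φ_i, φ_j⟩, and let z, z' ∈ {0,1}^M both satisfy Σ_i z_i = Σ_i z'_i = k for an integer k ≥ 1. Setting φ̂_I = (1/M)·Σ_{i=1}^M φ_i, φ̂_C = (1/k)·Σ_i z_i·φ_i and φ̂_{C'} = (1/k)·Σ_i z'_i·φ_i, and letting G(z) = zᵀ((1/k²)·𝒦 + λ·1_M·1_Mᵀ)z − 2·((1/(kM))·𝒦·1_M + λk·1_M)ᵀz denote the KDC QUBO objective for any real λ, it holds that G(z) ≤ G(z') if and only if ‖φ̂_I − φ̂_C‖² ≤ ‖φ̂_I − φ̂_{C'}‖².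 In particular, over the feasible set {z ∈ {0,1}^M : Σ_i z_i = k}, the minimizers of the KDC QUBO are exactly the minimizers of the kernel density clustering discrepancy ‖φ̂_I − φ̂_C‖². -/
open Matrix BigOperators RealInnerProductSpace

/-- Equivalence of the KDC QUBO and the kernel density clustering discrepancy
(Proposition 2): on the feasible set of binary vectors selecting exactly `k` points,
`G(z) ≤ G(z')` iff `‖φ̂_I − φ̂_C‖² ≤ ‖φ̂_I − φ̂_{C'}‖²`; in particular, the minimizers of
the KDC QUBO over the feasible set are exactly the minimizers of the discrepancy. -/
theorem kdc_qubo_equiv_discrepancy {H : Type*} [NormedAddCommGroup H]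
    [InnerProductSpace ℝ H]
    (M : ℕ) (hM : 1 ≤ M) (φ : Fin M → H)
    (𝒦 : Matrix (Fin M) (Fin M) ℝ) (h𝒦 : ∀ i j, 𝒦 i j = ⟪φ i, φ j⟫)
    (k : ℕ) (hk : 1 ≤ k) (lam : ℝ) :
    let one : Fin M → ℝ := fun _ => 1
    let feas : Set (Fin M → ℝ) :=
      {z | (∀ i, z i = 0 ∨ z i = 1) ∧ ∑ i, z i = (k : ℝ)}
    let G : (Fin M → ℝ) → ℝ := fun z =>
      z ⬝ᵥ (((k : ℝ) ^ 2)⁻¹ • 𝒦 + lam • vecMulVec one one) *ᵥ z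
        - 2 * (((((k : ℝ) * (M : ℝ))⁻¹) • (𝒦 *ᵥ one) + (lam * (k : ℝ)) • one) ⬝ᵥ z)
    let φI : H := (M : ℝ)⁻¹ • ∑ i, φ i
    let φC : (Fin M → ℝ) → H := fun z => (k : ℝ)⁻¹ • ∑ i, z i • φ i
    (∀ z ∈ feas, ∀ z' ∈ feas,
      (G z ≤ G z' ↔ ‖φI - φC z‖ ^ 2 ≤ ‖φI - φC z'‖ ^ 2)) ∧
    (∀ z ∈ feas,
      ((∀ z' ∈ feas, G z ≤ G z') ↔
        (∀ z' ∈ feas, ‖φI - φC z‖ ^ 2 ≤ ‖φI - φC z'‖ ^ 2))) := by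
  intro one feas G φI φC
  have hC : ∀ z : Fin M → ℝ,
      ‖φC z‖^2 = ((k:ℝ)^2)⁻¹ * ∑ i, ∑ j, z i * z j * 𝒦 i j := by
    intro z
    rw [← real_inner_self_eq_norm_sq]
    simp only [φC, inner_smul_left, inner_smul_right, sum_inner, inner_sum, h𝒦,
      RCLike.star_def, conj_trivial, Finset.mul_sum]
    refine Finset.sum_congr rfl fun i _ => Finset.sum_congr rfl fun j _ => ?_
    rw [real_inner_comm]; ring
  have hIC : ∀ z : Fin M → ℝ,
      ⟪φI, φC z⟫ = (M:ℝ)⁻¹ * (k:ℝ)⁻¹ * ∑ i, ∑ j, z i * 𝒦 i j := by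
    intro z
    simp only [φI, φC, inner_smul_left, inner_smul_right, sum_inner, inner_sum, h𝒦,
      RCLike.star_def, conj_trivial, Finset.mul_sum]
    refine Finset.sum_congr rfl fun i _ => Finset.sum_congr rfl fun j _ => ?_
    rw [real_inner_comm]; ring
  have key : ∀ z ∈ feas, G z = ‖φI - φC z‖^2 - ‖φI‖^2 - lam * (k:ℝ)^2 := by
    rintro z ⟨hz01, hzsum⟩
    have hns : ‖φI - φC z‖^2 = ‖φI‖^2 - 2*⟪φI, φC z⟫ + ‖φC z‖^2 :=
      norm_sub_sq_real _ _
    have hquad : z ⬝ᵥ (((k : ℝ) ^ 2)⁻¹ • 𝒦 + lam • vecMulVec one one) *ᵥ z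
        = ((k:ℝ)^2)⁻¹ * (∑ i, ∑ j, z i * z j * 𝒦 i j) + lam * (k:ℝ)^2 := by
      simp only [dotProduct, mulVec, Matrix.add_apply, Matrix.smul_apply,
        vecMulVec_apply, one, smul_eq_mul, dotProduct, Finset.mul_sum]
      have e1 : ∀ x i : Fin M, z x * ((((k:ℝ) ^ 2)⁻¹ * 𝒦 x i + lam * (1 * 1)) * z i)
          = ((k:ℝ) ^ 2)⁻¹ * (z x * z i * 𝒦 x i) + lam * (z x * z i) := fun x i => by ring
      simp only [e1, Finset.sum_add_distrib]
      have h2 : ∑ x : Fin M, ∑ i : Fin M, lam * (z x * z i)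
          = lam * ((∑ i, z i) * (∑ i, z i)) := by
        rw [Finset.sum_mul_sum, Finset.mul_sum]
        refine Finset.sum_congr rfl fun x _ => ?_
        rw [Finset.mul_sum]
      rw [h2, hzsum]
      congr 1
      ring
    have hlin : ((((k : ℝ) * (M : ℝ))⁻¹) • (𝒦 *ᵥ one) + (lam * (k : ℝ)) • one) ⬝ᵥ z
        = (M:ℝ)⁻¹ * (k:ℝ)⁻¹ * (∑ i, ∑ j, z i * 𝒦 i j) + lam * (k:ℝ)^2 := by
      simp only [dotProduct, mulVec, Pi.add_apply, Pi.smul_apply, one, smul_eq_mul,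
        dotProduct]
      have e2 : ∀ x : Fin M,
          (((k:ℝ) * (M:ℝ))⁻¹ * ∑ j, 𝒦 x j * 1 + lam * (k:ℝ) * 1) * z x
          = (∑ j, (M:ℝ)⁻¹ * (k:ℝ)⁻¹ * (z x * 𝒦 x j)) + lam * (k:ℝ) * z x := by
        intro x
        rw [add_mul, Finset.mul_sum, Finset.sum_mul]
        congr 1
        · exact Finset.sum_congr rfl fun j _ => by field_simp
        · ring
      simp only [e2, Finset.sum_add_distrib]
      rw [← Finset.mul_sum, hzsum, Finset.mul_sum]
      congr 1
      · refine Finset.sum_congr rfl fun i _ => ?_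
        rw [Finset.mul_sum]
      · ring
    simp only [G, hquad, hlin, hns, hC z, hIC z]
    ring
  have main : ∀ z ∈ feas, ∀ z' ∈ feas,
      (G z ≤ G z' ↔ ‖φI - φC z‖ ^ 2 ≤ ‖φI - φC z'‖ ^ 2) := by
    intro z hz z' hz'
    rw [key z hz, key z' hz']
    constructor <;> intro h <;> linarith
  exact ⟨main, fun z hz => ⟨fun h z' hz' => (main z hz z' hz').1 (h z' hz'),
    fun h z' hz' => (main z hz z' hz').2 (h z' hz')⟩⟩
end
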